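/- For the Pareto family P_ϑ = Pareto(1, ϑ) with shape parameter ϑ > 2 (density ϑ x^{−ϑ−1} on (1,∞)), the squared 2-Wasserstein distance satisfies W₂²(P_t, P_ϑ) = 2(t−ϑ)² / ((tϑ − t − ϑ)(t−2)(ϑ−2)) for all t, ϑ > 2. -/

import Mathlib

open Real Set MeasureTheory

theorem stmt7 (t ϑ : ℝ) (ht : 2 < t) (hϑ : 2 < ϑ) :
    (∫ u in Set.Ioo (0 : ℝ) 1, ((1 - u) ^ (-(1 / t)) - (1 - u) ^ (-(1 / ϑ))) ^ 2)
      = 2 * (t - ϑ) ^ 2 / ((t * ϑ - t - ϑ) * (t - 2) * (ϑ - 2)) := by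
  have ht0 : (0:ℝ) < t := by linarith
  have hϑ0 : (0:ℝ) < ϑ := by linarith
  have h1 : (-1:ℝ) < -(1/t) - 1/t := by
    have : 1/t < 1/2 := by
      rw [div_lt_div_iff₀ ht0 (by norm_num)]; linarith
    linarith
  have h2 : (-1:ℝ) < -(1/ϑ) - 1/ϑ := by
    have : 1/ϑ < 1/2 := by
      rw [div_lt_div_iff₀ hϑ0 (by norm_num)]; linarith
    linarith
  have h3 : (-1:ℝ) < -(1/t) - 1/ϑ := by
    have h1' : 1/t < 1/2 := by
      rw [div_lt_div_iff₀ ht0 (by norm_num)]; linarith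
    have h2' : 1/ϑ < 1/2 := by
      rw [div_lt_div_iff₀ hϑ0 (by norm_num)]; linarith
    linarith
  rw [← MeasureTheory.integral_Ioc_eq_integral_Ioo,
    ← intervalIntegral.integral_of_le (by norm_num : (0:ℝ) ≤ 1)]
  have key : (∫ u in (0:ℝ)..1, ((1 - u) ^ (-(1 / t)) - (1 - u) ^ (-(1 / ϑ))) ^ 2)
      = ∫ v in (0:ℝ)..1, (v ^ (-(1 / t)) - v ^ (-(1 / ϑ))) ^ 2 := by
    have := intervalIntegral.integral_comp_sub_left
      (fun v : ℝ => (v ^ (-(1 / t)) - v ^ (-(1 / ϑ))) ^ 2) 1 (a := 0) (b := 1)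
    simpa using this
  rw [key]
  have congrEq : (∫ v in (0:ℝ)..1, (v ^ (-(1 / t)) - v ^ (-(1 / ϑ))) ^ 2)
      = ∫ v in (0:ℝ)..1,
        (v ^ (-(1/t) - 1/t) - 2 * v ^ (-(1/t) - 1/ϑ) + v ^ (-(1/ϑ) - 1/ϑ)) := by
    rw [intervalIntegral.integral_of_le (by norm_num : (0:ℝ) ≤ 1),
        intervalIntegral.integral_of_le (by norm_num : (0:ℝ) ≤ 1)]
    apply MeasureTheory.setIntegral_congr_fun measurableSet_Ioc
    intro v hv
    have hv0 : 0 < v := hv.1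
    dsimp only
    rw [show -(1/t) - 1/t = -(1/t) + -(1/t) from by ring,
        show -(1/t) - 1/ϑ = -(1/t) + -(1/ϑ) from by ring,
        show -(1/ϑ) - 1/ϑ = -(1/ϑ) + -(1/ϑ) from by ring,
        rpow_add hv0, rpow_add hv0, rpow_add hv0]
    ring
  rw [congrEq]
  have i1 : IntervalIntegrable (fun v : ℝ => v ^ (-(1/t) - 1/t)) volume 0 1 :=
    intervalIntegral.intervalIntegrable_rpow' h1
  have i2 : IntervalIntegrable (fun v : ℝ => v ^ (-(1/t) - 1/ϑ)) volume 0 1 :=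
    intervalIntegral.intervalIntegrable_rpow' h3
  have i3 : IntervalIntegrable (fun v : ℝ => v ^ (-(1/ϑ) - 1/ϑ)) volume 0 1 :=
    intervalIntegral.intervalIntegrable_rpow' h2
  rw [intervalIntegral.integral_add (i1.sub (i2.const_mul 2)) i3,
      intervalIntegral.integral_sub i1 (i2.const_mul 2),
      intervalIntegral.integral_const_mul,
      integral_rpow (Or.inl h1), integral_rpow (Or.inl h3), integral_rpow (Or.inl h2)]
  rw [Real.zero_rpow (by linarith), Real.zero_rpow (by linarith), Real.zero_rpow (by linarith),
      Real.one_rpow, Real.one_rpow, Real.one_rpow]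
  have htϑ : 0 < t * ϑ - t - ϑ := by nlinarith
  have ht' : t ≠ 0 := ne_of_gt ht0
  have hϑ' : ϑ ≠ 0 := ne_of_gt hϑ0
  have d1 : (-(1/t) - 1/t + 1) ≠ 0 := by
    field_simp
    intro h; rcases div_eq_zero_iff.mp h with h | h <;> nlinarith
  have d2 : (-(1/t) - 1/ϑ + 1) ≠ 0 := by
    field_simp
    intro h; rcases div_eq_zero_iff.mp h with h | h <;> nlinarith
  have d3 : (-(1/ϑ) - 1/ϑ + 1) ≠ 0 := by
    field_simp
    intro h; rcases div_eq_zero_iff.mp h with h | h <;> nlinarith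
  have e1 : (t - 2) ≠ 0 := by linarith
  have e2 : (ϑ - 2) ≠ 0 := by linarith
  have e3 : (t * ϑ - t - ϑ) ≠ 0 := ne_of_gt htϑ
  have E1 : ((1:ℝ) - 0) / (-(1/t) - 1/t + 1) = t / (t - 2) := by
    rw [div_eq_div_iff (by rw [show -(1/t) - 1/t + 1 = (t-2)/t from by field_simp; ring]; positivity) (by positivity)]
    field_simp
    ring
  have E2 : ((1:ℝ) - 0) / (-(1/t) - 1/ϑ + 1) = t * ϑ / (t * ϑ - t - ϑ) := by
    rw [div_eq_div_iff (by rw [show -(1/t) - 1/ϑ + 1 = (t*ϑ-t-ϑ)/(t*ϑ) from by field_simp; ring]; positivity) e3]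
    field_simp
    ring
  have E3 : ((1:ℝ) - 0) / (-(1/ϑ) - 1/ϑ + 1) = ϑ / (ϑ - 2) := by
    rw [div_eq_div_iff (by rw [show -(1/ϑ) - 1/ϑ + 1 = (ϑ-2)/ϑ from by field_simp; ring]; positivity) (by positivity)]
    field_simp
    ring
  rw [E1, E2, E3]
  generalize hs : t * ϑ - t - ϑ = s at e3 ⊢
  field_simp
  subst hs
  ring
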